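/- For every real s, the Bernstein matrix admits the spectral factorization B_n^e(s) = P_n G_n(s) P_n^{-1}, where P_n is the lower triangular Pascal matrix and G_n(s) = diag(1, s, ..., s^{n-1}). -/

import Mathlib

open Finset

lemma bernstein_key_sum (s : ℝ) {i k : ℕ} (h : k ≤ i) :
    ∑ j ∈ Finset.Icc k i,
      ((i.choose j : ℝ) * s ^ j * (1 - s) ^ (i - j) * (j.choose k : ℝ))
      = (i.choose k : ℝ) * s ^ k := by
  have hcong : ∀ j ∈ Finset.Icc k i,
      (i.choose j : ℝ) * s ^ j * (1 - s) ^ (i - j) * (j.choose k : ℝ)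
      = (i.choose k : ℝ) * s ^ k *
        (((i - k).choose (j - k) : ℝ) * s ^ (j - k) * (1 - s) ^ ((i - k) - (j - k))) := by
    intro j hj
    rw [Finset.mem_Icc] at hj
    obtain ⟨hkj, hji⟩ := hj
    have hc := Nat.choose_mul (n := i) hkj
    have hc' : (i.choose j : ℝ) * (j.choose k : ℝ)
        = (i.choose k : ℝ) * ((i - k).choose (j - k) : ℝ) := by
      exact_mod_cast congrArg (Nat.cast (R := ℝ)) hc
    have hsub : (i - k) - (j - k) = i - j := Nat.sub_sub_sub_cancel_right hkj
    have hpow : s ^ j = s ^ k * s ^ (j - k) := by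
      rw [← pow_add, Nat.add_sub_cancel' hkj]
    rw [hsub, hpow]
    linear_combination (s ^ k * s ^ (j - k) * (1 - s) ^ (i - j)) * hc'
  rw [Finset.sum_congr rfl hcong, ← Finset.mul_sum]
  have hone : ∑ j ∈ Finset.Icc k i,
      (((i - k).choose (j - k) : ℝ) * s ^ (j - k) * (1 - s) ^ ((i - k) - (j - k))) = 1 := by
    rw [← Finset.Ico_add_one_right_eq_Icc, Finset.sum_Ico_eq_sum_range]
    have hN : i + 1 - k = (i - k) + 1 := by omega
    rw [hN]
    have : ∀ j ∈ Finset.range ((i - k) + 1),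
        (((i - k).choose (k + j - k) : ℝ) * s ^ (k + j - k) * (1 - s) ^ ((i - k) - (k + j - k)))
        = s ^ j * (1 - s) ^ ((i - k) - j) * ((i - k).choose j : ℝ) := by
      intro j _
      have : k + j - k = j := by omega
      rw [this]; ring
    rw [Finset.sum_congr rfl this, ← add_pow]
    norm_num
  rw [hone, mul_one]

/-- For every real `s`, `B_n^e(s) = P_n G_n(s) P_n⁻¹`. -/
theorem bernstein_spectral_factorization (n : ℕ) (s : ℝ)
    (B : Matrix (Fin n) (Fin n) ℝ)
    (hB : ∀ i j : Fin n, B i j =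
      if (j : ℕ) ≤ (i : ℕ) then
        ((i : ℕ).choose j : ℝ) * s ^ (j : ℕ) * (1 - s) ^ ((i : ℕ) - (j : ℕ))
      else 0)
    (P : Matrix (Fin n) (Fin n) ℝ)
    (hP : ∀ i j : Fin n, P i j = if (j : ℕ) ≤ (i : ℕ) then ((i : ℕ).choose j : ℝ) else 0)
    (G : Matrix (Fin n) (Fin n) ℝ)
    (hG : G = Matrix.diagonal (fun i : Fin n => s ^ (i : ℕ))) :
    B = P * G * P⁻¹ := by
  have hdet : P.det = 1 := by
    have htri : P.BlockTriangular OrderDual.toDual := by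
      intro i j hij
      rw [hP]
      exact if_neg (by simpa using hij)
    rw [Matrix.det_of_lowerTriangular P htri]
    have : ∀ i : Fin n, P i i = 1 := by
      intro i; rw [hP]; simp
    simp [this]
  have hunit : IsUnit P.det := by rw [hdet]; exact isUnit_one
  have hBP : B * P = P * G := by
    ext i k
    rw [Matrix.mul_apply, hG, Matrix.mul_diagonal, hP]
    simp only [hB, hP]
    have hsum : ∑ j : Fin n,
        (if (j : ℕ) ≤ (i : ℕ) then
          ((i : ℕ).choose j : ℝ) * s ^ (j : ℕ) * (1 - s) ^ ((i : ℕ) - (j : ℕ)) else 0) *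
        (if (k : ℕ) ≤ (j : ℕ) then ((j : ℕ).choose k : ℝ) else 0)
        = ∑ j ∈ Finset.range n,
        (if j ≤ (i : ℕ) then
          ((i : ℕ).choose j : ℝ) * s ^ j * (1 - s) ^ ((i : ℕ) - j) else 0) *
        (if (k : ℕ) ≤ j then ((j : ℕ).choose k : ℝ) else 0) :=
      Fin.sum_univ_eq_sum_range (fun j =>
        (if j ≤ (i : ℕ) then
          ((i : ℕ).choose j : ℝ) * s ^ j * (1 - s) ^ ((i : ℕ) - j) else 0) *
        (if (k : ℕ) ≤ j then ((j : ℕ).choose k : ℝ) else 0)) n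
    rw [hsum]
    by_cases hik : (k : ℕ) ≤ (i : ℕ)
    · rw [if_pos hik]
      have hsubset : Finset.Icc (k : ℕ) (i : ℕ) ⊆ Finset.range n := by
        intro j hj
        rw [Finset.mem_Icc] at hj
        exact Finset.mem_range.mpr (lt_of_le_of_lt hj.2 i.isLt)
      rw [← Finset.sum_subset hsubset]
      · rw [← bernstein_key_sum s hik]
        apply Finset.sum_congr rfl
        intro j hj
        rw [Finset.mem_Icc] at hj
        rw [if_pos hj.2, if_pos hj.1]
      · intro j _ hj
        rw [Finset.mem_Icc] at hj
        rcases Nat.lt_or_ge j k with h1 | h1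
        · rw [if_neg (show ¬ (k : ℕ) ≤ j by omega), mul_zero]
        · rw [if_neg (show ¬ j ≤ (i : ℕ) by omega), zero_mul]
    · rw [if_neg hik]
      rw [Finset.sum_eq_zero, zero_mul]
      intro j _
      rcases Nat.lt_or_ge j k with h1 | h1
      · rw [if_neg (show ¬ (k : ℕ) ≤ j by omega), mul_zero]
      · rw [if_neg (show ¬ j ≤ (i : ℕ) by omega), zero_mul]
  rw [← hBP, Matrix.mul_nonsing_inv_cancel_right _ _ hunit]
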